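/- The reproduction process of the BSMS(p) is a first-order Markov chain with the same transition probabilities as the source (part of Theorem 9): fix p ∈ (0,1) and D ∈ (0,1/2), and let ((X_i, Y_i))_{i=0,…,n} be the Markov chain on {0,1}² with transition matrix Π((x',y') | (x,y)) = T_p(x' | x) · Q*(y' | y, x') and initial distribution π̄(x,y) = (1−D)/2 if x=y, D/2 otherwise. Then for every (y_0, y_1, …, y_n) ∈ {0,1}^{n+1}, ℙ(Y_0 = y_0, Y_1 = y_1, …, Y_n = y_n) = (1/2) · ∏_{i=1}^{n} T_p(y_i | y_{i−1}); that is, the marginal process (Y_i) is itself a stationary binary symmetric Markov chain with flip probability p and uniform initial distribution. -/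

import Mathlib

open MeasureTheory
open scoped ENNReal

/-- The BSMS(`p`) transition kernel on `{0,1}`: `T_p(x' | x) = 1 - p` if `x' = x`, `p`
otherwise. -/
noncomputable def bsmsKernel (p : ℝ) (x' x : Bool) : ℝ := if x' = x then 1 - p else p

/-- `α = (1-p)(1-D)/m` with `m = 1 - p - D + 2pD`. -/
noncomputable def bsmsAlpha (p D : ℝ) : ℝ := (1 - p) * (1 - D) / (1 - p - D + 2 * p * D)

/-- `β = p(1-D)/(1-m)` with `1 - m = p + D - 2pD`. -/
noncomputable def bsmsBeta (p D : ℝ) : ℝ := p * (1 - D) / (p + D - 2 * p * D)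

/-- The optimal reproduction kernel `Q*(y | y', x)` of the nonanticipative RDF of the
BSMS(`p`) with Hamming distortion. -/
noncomputable def bsmsQstar (p D : ℝ) (y' x y : Bool) : ℝ :=
  if y = x then (if y = y' then bsmsAlpha p D else bsmsBeta p D)
  else (if y = y' then 1 - bsmsBeta p D else 1 - bsmsAlpha p D)

/-- The transition matrix `Π((x',y') | (x,y)) = T_p(x' | x) · Q*(y' | y, x')` of the joint
source–reproduction pair process. -/
noncomputable def bsmsJointKernel (p D : ℝ) (z' z : Bool × Bool) : ℝ :=
  bsmsKernel p z'.1 z.1 * bsmsQstar p D z.2 z'.1 z'.2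

/-- The probability vector `π̄` on `{0,1}²`: `π̄(x,y) = (1-D)/2` if `x = y` and `D/2`
otherwise. -/
noncomputable def bsmsPiBar (D : ℝ) (z : Bool × Bool) : ℝ :=
  if z.1 = z.2 then (1 - D) / 2 else D / 2

section Aux
variable {p D : ℝ}

lemma bsms_m_pos (hp : p ∈ Set.Ioo (0 : ℝ) 1) (hD : D ∈ Set.Ioo (0 : ℝ) (1 / 2)) :
    0 < 1 - p - D + 2 * p * D := by
  obtain ⟨h1, h2⟩ := hp; obtain ⟨h3, h4⟩ := hD
  nlinarith [mul_pos (by linarith : (0:ℝ) < 1 - p) (by linarith : (0:ℝ) < 1 - D),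
    mul_pos h1 h3]

lemma bsms_m'_pos (hp : p ∈ Set.Ioo (0 : ℝ) 1) (hD : D ∈ Set.Ioo (0 : ℝ) (1 / 2)) :
    0 < p + D - 2 * p * D := by
  obtain ⟨h1, h2⟩ := hp; obtain ⟨h3, h4⟩ := hD
  nlinarith [mul_pos h1 (by linarith : (0:ℝ) < 1 - D),
    mul_pos h3 (by linarith : (0:ℝ) < 1 - p)]

lemma bsmsAlpha_pos (hp : p ∈ Set.Ioo (0 : ℝ) 1) (hD : D ∈ Set.Ioo (0 : ℝ) (1 / 2)) :
    0 < bsmsAlpha p D := by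
  have := bsms_m_pos hp hD
  obtain ⟨h1, h2⟩ := hp; obtain ⟨h3, h4⟩ := hD
  exact div_pos (mul_pos (by linarith) (by linarith)) this

lemma bsmsAlpha_lt_one (hp : p ∈ Set.Ioo (0 : ℝ) 1) (hD : D ∈ Set.Ioo (0 : ℝ) (1 / 2)) :
    bsmsAlpha p D < 1 := by
  have := bsms_m_pos hp hD
  obtain ⟨h1, h2⟩ := hp; obtain ⟨h3, h4⟩ := hD
  rw [bsmsAlpha, div_lt_one this]
  nlinarith [mul_pos h1 h3]

lemma bsmsBeta_pos (hp : p ∈ Set.Ioo (0 : ℝ) 1) (hD : D ∈ Set.Ioo (0 : ℝ) (1 / 2)) :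
    0 < bsmsBeta p D := by
  have := bsms_m'_pos hp hD
  obtain ⟨h1, h2⟩ := hp; obtain ⟨h3, h4⟩ := hD
  exact div_pos (mul_pos (by linarith) (by linarith)) this

lemma bsmsBeta_lt_one (hp : p ∈ Set.Ioo (0 : ℝ) 1) (hD : D ∈ Set.Ioo (0 : ℝ) (1 / 2)) :
    bsmsBeta p D < 1 := by
  have := bsms_m'_pos hp hD
  obtain ⟨h1, h2⟩ := hp; obtain ⟨h3, h4⟩ := hD
  rw [bsmsBeta, div_lt_one this]
  nlinarith [mul_pos h3 (by linarith : (0:ℝ) < 1 - p)]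

lemma bsmsQstar_pos (hp : p ∈ Set.Ioo (0 : ℝ) 1) (hD : D ∈ Set.Ioo (0 : ℝ) (1 / 2))
    (y' x y : Bool) : 0 < bsmsQstar p D y' x y := by
  have a1 := bsmsAlpha_pos hp hD
  have a2 := bsmsAlpha_lt_one hp hD
  have b1 := bsmsBeta_pos hp hD
  have b2 := bsmsBeta_lt_one hp hD
  unfold bsmsQstar; split_ifs <;> linarith

lemma bsmsKernel_pos (hp : p ∈ Set.Ioo (0 : ℝ) 1) (x' x : Bool) : 0 < bsmsKernel p x' x := by
  obtain ⟨h1, h2⟩ := hp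
  unfold bsmsKernel; split_ifs <;> linarith

lemma bsmsJointKernel_pos (hp : p ∈ Set.Ioo (0 : ℝ) 1) (hD : D ∈ Set.Ioo (0 : ℝ) (1 / 2))
    (z' z : Bool × Bool) : 0 < bsmsJointKernel p D z' z :=
  mul_pos (bsmsKernel_pos hp _ _) (bsmsQstar_pos hp hD _ _ _)

lemma bsmsPiBar_pos (hD : D ∈ Set.Ioo (0 : ℝ) (1 / 2)) (z : Bool × Bool) :
    0 < bsmsPiBar D z := by
  obtain ⟨h3, h4⟩ := hD
  unfold bsmsPiBar; split_ifs <;> linarith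

lemma bsms_key (hp : p ∈ Set.Ioo (0 : ℝ) 1) (hD : D ∈ Set.Ioo (0 : ℝ) (1 / 2)) (a b x' : Bool) :
    (∑ x : Bool, bsmsJointKernel p D (x', b) (x, a) * bsmsPiBar D (x, a))
      = bsmsKernel p b a * bsmsPiBar D (x', b) := by
  have hm := (bsms_m_pos hp hD).ne'
  have hm' := (bsms_m'_pos hp hD).ne'
  obtain ⟨h1, h2⟩ := hp; obtain ⟨h3, h4⟩ := hD
  cases a <;> cases b <;> cases x' <;>
    · simp only [Fintype.sum_bool, bsmsJointKernel, bsmsPiBar, bsmsQstar, bsmsKernel,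
        bsmsAlpha, bsmsBeta]
      norm_num
      field_simp [show 1 - p - D + p * D * 2 ≠ 0 by convert hm using 1; ring,
        show p + D - p * D * 2 ≠ 0 by convert hm' using 1; ring]
      ring

end Aux

lemma bsms_sum {p D : ℝ} (hp : p ∈ Set.Ioo (0 : ℝ) 1) (hD : D ∈ Set.Ioo (0 : ℝ) (1 / 2)) :
    ∀ (k : ℕ) (t : Fin (k + 1) → Bool),
    (∑ xs : Fin (k + 1) → Bool, bsmsPiBar D (xs 0, t 0) *
        ∏ i : Fin k, bsmsJointKernel p D (xs i.succ, t i.succ) (xs i.castSucc, t i.castSucc))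
      = (1 / 2) * ∏ i : Fin k, bsmsKernel p (t i.succ) (t i.castSucc) := by
  intro k
  induction k with
  | zero =>
    intro t
    rw [← Equiv.sum_comp (Fin.consEquiv (fun _ : Fin 1 => Bool))]
    rw [Fintype.sum_prod_type]
    cases h : t 0 <;>
      simp [bsmsPiBar, h] <;> ring
  | succ k ih =>
    intro t
    rw [← Equiv.sum_comp (Fin.consEquiv (fun _ : Fin (k + 2) => Bool))]
    rw [Fintype.sum_prod_type]
    have hcons : ∀ (x0 : Bool) (rest : Fin (k + 1) → Bool),
        (Fin.consEquiv (fun _ : Fin (k + 2) => Bool)) (x0, rest) = Fin.cons x0 rest := fun _ _ => rfl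
    simp only [hcons]
    have hsplit : ∀ (x0 : Bool) (rest : Fin (k + 1) → Bool),
        (∏ i : Fin (k + 1), bsmsJointKernel p D ((Fin.cons x0 rest : Fin (k + 2) → Bool) i.succ, t i.succ)
            ((Fin.cons x0 rest : Fin (k + 2) → Bool) i.castSucc, t i.castSucc))
          = bsmsJointKernel p D (rest 0, t 1) (x0, t 0) *
              ∏ i : Fin k, bsmsJointKernel p D (rest i.succ, t i.succ.succ)
                (rest i.castSucc, t i.castSucc.succ) := by
      intro x0 rest
      rw [Fin.prod_univ_succ]
      congr 1
    simp only [Fin.cons_zero, hsplit]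
    rw [Finset.sum_comm]
    have hinner : ∀ rest : Fin (k + 1) → Bool,
        (∑ x0 : Bool, bsmsPiBar D (x0, t 0) *
            (bsmsJointKernel p D (rest 0, t 1) (x0, t 0) *
              ∏ i : Fin k, bsmsJointKernel p D (rest i.succ, t i.succ.succ)
                (rest i.castSucc, t i.castSucc.succ)))
          = (bsmsKernel p (t 1) (t 0) * bsmsPiBar D (rest 0, t 1)) *
              ∏ i : Fin k, bsmsJointKernel p D (rest i.succ, t i.succ.succ)
                (rest i.castSucc, t i.castSucc.succ) := by
      intro rest
      rw [← bsms_key hp hD (t 0) (t 1) (rest 0), Finset.sum_mul]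
      apply Finset.sum_congr rfl
      intro x0 _
      ring
    simp only [hinner]
    have := ih (fun j => t j.succ)
    simp only [mul_assoc, ← Finset.mul_sum]
    have heq : (∑ rest : Fin (k + 1) → Bool, bsmsPiBar D (rest 0, t 1) *
        ∏ i : Fin k, bsmsJointKernel p D (rest i.succ, t i.succ.succ)
          (rest i.castSucc, t i.castSucc.succ))
        = (1 / 2) * ∏ i : Fin k, bsmsKernel p (t i.succ.succ) (t i.castSucc.succ) := by
      have h0 : t (0 : Fin (k + 1)).succ = t 1 := by norm_num
      rw [← h0]
      exact ih (fun j => t j.succ)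
    rw [heq, Fin.prod_univ_succ
      (f := fun i : Fin (k + 1) => bsmsKernel p (t i.succ) (t i.castSucc))]
    have hlast : ∀ i : Fin k, bsmsKernel p (t i.succ.succ) (t i.succ.castSucc)
        = bsmsKernel p (t i.succ.succ) (t i.castSucc.succ) := by
      intro i; rw [Fin.succ_castSucc]
    simp only [hlast, Fin.castSucc_zero]
    have h01 : t (0 : Fin (k+1)).succ = t 1 := by norm_num
    rw [h01]
    ring

/-- **The reproduction process of the BSMS(p) is a first-order Markov chain with the same
transition probabilities as the source** (part of Theorem 9): for the Markov chain
`Z_i = (X_i, Y_i)` on `{0,1}²` with transition matrix `Π((x',y')|(x,y)) = T_p(x'|x)·Q*(y'|y,x')`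
and initial distribution `π̄`, the marginal process `(Y_i)` satisfies
`ℙ(Y_0 = y_0, …, Y_n = y_n) = (1/2) ∏_{i=1}^n T_p(y_i | y_{i-1})`, i.e. it is a stationary
binary symmetric Markov chain with flip probability `p` and uniform initial distribution. -/
theorem bsms_reproduction_process_markov
    {Ω : Type*} [MeasurableSpace Ω] (P : Measure Ω) [IsProbabilityMeasure P]
    (p D : ℝ) (hp : p ∈ Set.Ioo (0 : ℝ) 1) (hD : D ∈ Set.Ioo (0 : ℝ) (1 / 2))
    (n : ℕ) (Z : ℕ → Ω → Bool × Bool)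
    (hZm : ∀ i, Measurable (Z i))
    -- initial distribution `π̄`
    (hinit : ∀ z : Bool × Bool, P {ω | Z 0 ω = z} = ENNReal.ofReal (bsmsPiBar D z))
    -- Markov property with transition matrix `Π`
    (hmarkov : ∀ i : ℕ, ∀ h1 : 1 ≤ i, i ≤ n → ∀ z : Bool × Bool,
      ∀ zs : Fin i → Bool × Bool,
      P {ω | ∀ j : Fin i, Z j ω = zs j} ≠ 0 →
      P ({ω | ∀ j : Fin i, Z j ω = zs j} ∩ {ω | Z i ω = z})
        = ENNReal.ofReal (bsmsJointKernel p D z (zs ⟨i - 1, by omega⟩))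
            * P {ω | ∀ j : Fin i, Z j ω = zs j}) :
    ∀ ys : Fin (n + 1) → Bool,
      P {ω | ∀ j : Fin (n + 1), (Z j ω).2 = ys j}
        = ENNReal.ofReal
            ((1 / 2) * ∏ i : Fin n, bsmsKernel p (ys i.succ) (ys i.castSucc)) := by
  classical
  have hKpos := bsmsJointKernel_pos hp hD
  have hPpos := bsmsPiBar_pos hD
  have traj : ∀ k : ℕ, k ≤ n → ∀ zs : Fin (k + 1) → Bool × Bool,
      P {ω | ∀ j : Fin (k + 1), Z j ω = zs j}
        = ENNReal.ofReal (bsmsPiBar D (zs 0) *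
            ∏ i : Fin k, bsmsJointKernel p D (zs i.succ) (zs i.castSucc)) := by
    intro k
    induction k with
    | zero =>
      intro _ zs
      have hset : {ω | ∀ j : Fin 1, Z j ω = zs j} = {ω | Z 0 ω = zs 0} := by
        ext ω; simp only [Set.mem_setOf_eq]
        constructor
        · intro h; exact h 0
        · intro h j
          have hj : j = 0 := Subsingleton.elim j 0
          rw [hj]; exact h
      rw [hset, hinit]
      simp
    | succ k ih =>
      intro hk zs
      have hk' : k ≤ n := by omega
      have hprev := ih hk' (fun j => zs j.castSucc)
      have hpos : 0 < bsmsPiBar D (zs (0 : Fin (k + 1)).castSucc) *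
          ∏ i : Fin k, bsmsJointKernel p D (zs i.succ.castSucc) (zs i.castSucc.castSucc) :=
        mul_pos (hPpos _) (Finset.prod_pos fun i _ => hKpos _ _)
      have hne : P {ω | ∀ j : Fin (k + 1), Z j ω = zs j.castSucc} ≠ 0 := by
        rw [hprev]
        exact (ENNReal.ofReal_pos.mpr hpos).ne'
      have hmk := hmarkov (k + 1) (by omega) (by omega) (zs (Fin.last (k + 1)))
        (fun j => zs j.castSucc) hne
      have hset : {ω | ∀ j : Fin (k + 2), Z j ω = zs j}
          = {ω | ∀ j : Fin (k + 1), Z j ω = zs j.castSucc} ∩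
              {ω | Z (k + 1) ω = zs (Fin.last (k + 1))} := by
        ext ω; simp only [Set.mem_setOf_eq, Set.mem_inter_iff]
        constructor
        · intro h
          refine ⟨fun j => ?_, ?_⟩
          · have := h j.castSucc; simpa [Fin.coe_castSucc] using this
          · have := h (Fin.last (k + 1)); simpa [Fin.val_last] using this
        · rintro ⟨h1, h2⟩ j
          refine Fin.lastCases ?_ (fun i => ?_) j
          · simpa [Fin.val_last] using h2
          · simpa [Fin.coe_castSucc] using h1 i
      rw [hset, hmk, hprev, ← ENNReal.ofReal_mul (le_of_lt (hKpos _ _))]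
      congr 1
      rw [Fin.prod_univ_castSucc
        (f := fun i : Fin (k + 1) => bsmsJointKernel p D (zs i.succ) (zs i.castSucc))]
      simp only [Fin.castSucc_zero, Fin.succ_castSucc, Fin.succ_last]
      have h1 : (⟨k + 1 - 1, by omega⟩ : Fin (k + 1)) = Fin.last k := by
        apply Fin.ext; simp [Fin.val_last]
      have h2 : Fin.last (k + 1) = Fin.last k.succ := rfl
      rw [h1, h2]
      ring
  intro ys
  have hset : {ω | ∀ j : Fin (n + 1), (Z j ω).2 = ys j}
      = ⋃ xs ∈ (Finset.univ : Finset (Fin (n + 1) → Bool)),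
          {ω | ∀ j : Fin (n + 1), Z j ω = (xs j, ys j)} := by
    ext ω
    simp only [Set.mem_setOf_eq, Set.mem_iUnion, Finset.mem_univ]
    constructor
    · intro h
      exact ⟨fun j => (Z j ω).1, trivial, fun j => Prod.ext rfl (h j)⟩
    · rintro ⟨xs, -, hxs⟩ j
      rw [hxs j]
  have hdisj : ((Finset.univ : Finset (Fin (n + 1) → Bool)) : Set (Fin (n + 1) → Bool)).PairwiseDisjoint
      (fun xs => {ω | ∀ j : Fin (n + 1), Z j ω = (xs j, ys j)}) := by
    intro xs _ xs' _ hne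
    refine Set.disjoint_left.mpr fun ω h1 h2 => hne ?_
    funext j
    have e := (h1 j).symm.trans (h2 j)
    exact congrArg Prod.fst e
  have hmeas : ∀ xs ∈ (Finset.univ : Finset (Fin (n + 1) → Bool)),
      MeasurableSet {ω | ∀ j : Fin (n + 1), Z j ω = (xs j, ys j)} := by
    intro xs _
    have : {ω | ∀ j : Fin (n + 1), Z j ω = (xs j, ys j)}
        = ⋂ j : Fin (n + 1), Z j ⁻¹' {(xs j, ys j)} := by
      ext ω; simp [Set.mem_iInter]
    rw [this]
    exact MeasurableSet.iInter fun j => (hZm j) (measurableSet_singleton _)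
  rw [hset, measure_biUnion_finset hdisj hmeas]
  rw [Finset.sum_congr rfl fun xs _ => traj n le_rfl (fun j => (xs j, ys j))]
  rw [← ENNReal.ofReal_sum_of_nonneg fun xs _ =>
    le_of_lt (mul_pos (hPpos _) (Finset.prod_pos fun i _ => hKpos _ _))]
  congr 1
  exact bsms_sum hp hD n ys
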